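/- An invertible n×n complex matrix S satisfies C(S) = C_r(S) if and only if the all-ones vector e lies in C_r(S) and S is row Hadamard conic, i.e., r_i ∘ r_j ∈ C_r(S) for all i,j. -/

import Mathlib

open scoped ComplexOrder

def coniRows {n : ℕ} (S : Matrix (Fin n) (Fin n) ℂ) (x : Fin n → ℂ) : Prop :=
  ∃ α : Fin n → ℝ, (∀ k, 0 ≤ α k) ∧ x = ∑ k, α k • S k

lemma coniRows_row {n : ℕ} (S : Matrix (Fin n) (Fin n) ℂ) (a : Fin n) :
    coniRows S (S a) := by
  refine ⟨fun k => if k = a then 1 else 0, fun k => by by_cases hk : k = a <;> simp [hk], ?_⟩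
  simp [ite_smul]
  exact (Fintype.sum_ite_eq' a (fun x => (S x : Fin n → ℂ))).symm

lemma coniRows_sum {n : ℕ} (S : Matrix (Fin n) (Fin n) ℂ) (f : Fin n → Fin n → ℂ)
    (α : Fin n → ℝ) (hα : ∀ k, 0 ≤ α k) (hf : ∀ k, coniRows S (f k)) :
    coniRows S (∑ k, α k • f k) := by
  choose β hβ hfe using hf
  refine ⟨fun b => ∑ k, α k * β k b,
    fun b => Finset.sum_nonneg fun k _ => mul_nonneg (hα k) (hβ k b), ?_⟩
  calc ∑ k, α k • f k = ∑ k, ∑ b, (α k * β k b) • S b := by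
        refine Finset.sum_congr rfl fun k _ => ?_
        rw [hfe k, Finset.smul_sum]
        simp [smul_smul]
    _ = ∑ b, (∑ k, α k * β k b) • S b := by
        rw [Finset.sum_comm]
        simp [Finset.sum_smul]

lemma mem_C_iff {n : ℕ} (S : Matrix (Fin n) (Fin n) ℂ) (hS : IsUnit S) (x : Fin n → ℂ) :
    (∀ a b, 0 ≤ (S * Matrix.diagonal x * S⁻¹) a b) ↔ ∀ a, coniRows S (S a * x) := by
  have hdet : IsUnit S.det := (Matrix.isUnit_iff_isUnit_det S).mp hS
  have hSi : S⁻¹ * S = 1 := Matrix.nonsing_inv_mul S hdet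
  have hIS : S * S⁻¹ = 1 := Matrix.mul_nonsing_inv S hdet
  set A := S * Matrix.diagonal x * S⁻¹ with hA
  have hAS : A * S = S * Matrix.diagonal x := by
    rw [hA, Matrix.mul_assoc (S * Matrix.diagonal x) S⁻¹ S, hSi, Matrix.mul_one]
  have key : ∀ a j, (∑ b, A a b * S b j) = (S a * x) j := by
    intro a j
    have h0 : (A * S) a j = (S * Matrix.diagonal x) a j := by rw [hAS]
    rw [Matrix.mul_diagonal] at h0
    simpa [Matrix.mul_apply] using h0
  constructor
  · intro h a
    have him : ∀ b, (A a b).im = 0 := fun b => by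
      have := (Complex.le_def.mp (h a b)).2; simpa using this.symm
    have hAr : ∀ b, (((A a b).re : ℝ) : ℂ) = A a b := fun b => by
      apply Complex.ext <;> simp [him b]
    refine ⟨fun b => (A a b).re, fun b => ?_, ?_⟩
    · have := (Complex.le_def.mp (h a b)).1; simpa using this
    · funext j
      rw [← key a j]
      simp only [Finset.sum_apply, Pi.smul_apply, Complex.real_smul]
      exact Finset.sum_congr rfl fun b _ => by rw [hAr b]
  · intro h a b
    obtain ⟨α, hα, hx⟩ := h a
    have h1 : Matrix.vecMul (fun b => A a b) S = Matrix.vecMul (fun b => ((α b : ℝ) : ℂ)) S := by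
      funext j
      simp only [Matrix.vecMul, dotProduct]
      rw [key a j, hx]
      simp [Finset.sum_apply, Complex.real_smul]
    have hc : (fun b => A a b) = fun b => ((α b : ℝ) : ℂ) := by
      have h2 := congrArg (fun v => Matrix.vecMul v S⁻¹) h1
      simpa [Matrix.vecMul_vecMul, hIS] using h2
    have hab : A a b = ((α b : ℝ) : ℂ) := congrFun hc b
    rw [hab]
    exact Complex.zero_le_real.mpr (hα b)

theorem stmt2 {n : ℕ} (S : Matrix (Fin n) (Fin n) ℂ) (hS : IsUnit S) :
    {x : Fin n → ℂ | ∀ a b, 0 ≤ (S * Matrix.diagonal x * S⁻¹) a b} =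
        {x : Fin n → ℂ | coniRows S x} ↔
      (coniRows S (fun _ => 1) ∧ ∀ i j, coniRows S (S i * S j)) := by
  constructor
  · intro h
    have hmem : ∀ y : Fin n → ℂ,
        (∀ a b, 0 ≤ (S * Matrix.diagonal y * S⁻¹) a b) ↔ coniRows S y :=
      fun y => Set.ext_iff.mp h y
    constructor
    · refine (hmem _).mp ((mem_C_iff S hS _).mpr fun a => ?_)
      have : (S a * fun _ => (1 : ℂ)) = S a := by funext j; simp
      rw [this]
      exact coniRows_row S a
    · intro i j
      have hj := (hmem (S j)).mpr (coniRows_row S j)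
      exact (mem_C_iff S hS (S j)).mp hj i
  · rintro ⟨⟨αe, hαe, he⟩, hH⟩
    ext x
    simp only [Set.mem_setOf_eq]
    rw [mem_C_iff S hS x]
    constructor
    · intro h
      have hx : x = ∑ a, αe a • (S a * x) := by
        funext j
        have hj := congrFun he j
        simp only [Finset.sum_apply, Pi.smul_apply, Pi.mul_apply] at hj ⊢
        calc x j = 1 * x j := (one_mul _).symm
          _ = (∑ a, αe a • S a j) * x j := by rw [← hj]
          _ = ∑ a, αe a • (S a j * x j) := by
              rw [Finset.sum_mul]; simp only [smul_mul_assoc]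
      rw [hx]
      exact coniRows_sum S _ αe hαe h
    · rintro ⟨β, hβ, hx⟩ a
      have hax : S a * x = ∑ k, β k • (S a * S k) := by
        funext j
        rw [hx]
        simp only [Pi.mul_apply, Finset.sum_apply, Pi.smul_apply]
        rw [Finset.mul_sum]
        simp only [mul_smul_comm]
      rw [hax]
      exact coniRows_sum S _ β hβ fun k => hH a k
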